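/- arXiv:2302.01511 — 5 statements merged into one kernel-verified Lean document; each statement's English description precedes it below -/
import Mathlib

section
/- Let (Ω, P) be a probability space, X a finite nonempty index set, and for each x ∈ X let Z_x : Ω → ℝ be a random variable whose law is the Gaussian distribution N(μ_x, σ_x²), where μ_x ∈ ℝ and σ_x ≥ 0. Fix δ ∈ (0,1) with 2δ < |X|, and set β_δ = 2·log(|X|/(2δ)). Then P( Z_x ≤ μ_x + √β_δ · σ_x for all x ∈ X ) ≥ 1 − δ. -/
open MeasureTheory ProbabilityTheory Real
open scoped NNReal ENNReal

lemma integral_gaussianPDFReal_Ioi_self (m : ℝ) (v : ℝ≥0) (hv : v ≠ 0) :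
    ∫ x in Set.Ioi m, gaussianPDFReal m v x = 1/2 := by
  have hv0 : (0 : ℝ) < v := lt_of_le_of_ne v.coe_nonneg (by exact_mod_cast (Ne.symm hv))
  have hmap : Measure.map (· + m) (volume : Measure ℝ) = volume := map_add_right_eq_self volume m
  have hme : MeasurableEmbedding (fun x : ℝ => x + m) :=
    (Homeomorph.addRight m).measurableEmbedding
  calc ∫ x in Set.Ioi m, gaussianPDFReal m v x
      = ∫ x in Set.Ioi m, gaussianPDFReal m v x ∂(Measure.map (· + m) volume) := by rw [hmap]
    _ = ∫ x in (fun x : ℝ => x + m) ⁻¹' Set.Ioi m, gaussianPDFReal m v (x + m) := by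
        rw [hme.setIntegral_map]
    _ = ∫ x in Set.Ioi (0:ℝ), (√(2 * π * v))⁻¹ * rexp (-(1/(2*v)) * x ^ 2) := by
        congr 1
        · ext x; simp
        · ext x; rw [gaussianPDFReal]; ring_nf
    _ = (√(2 * π * v))⁻¹ * (√(π / (1/(2*v))) / 2) := by
        rw [integral_const_mul, integral_gaussian_Ioi]
    _ = 1/2 := by
        rw [div_div_eq_mul_div, div_one]
        rw [show π * (2 * (v:ℝ)) = 2 * π * v by ring]
        rw [inv_mul_eq_div, div_div]
        rw [div_eq_div_iff (by positivity) (by norm_num), one_mul]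
        rw [← Real.sqrt_mul_self (by positivity : (0:ℝ) ≤ √(2*π*(v:ℝ)))]; ring

lemma gaussian_tail_bound (m : ℝ) (v : ℝ≥0) (c : ℝ) (hc : 0 ≤ c) :
    gaussianReal m v (Set.Ioi (m + c * Real.sqrt v)) ≤ ENNReal.ofReal (rexp (-c^2/2) / 2) := by
  rcases eq_or_ne v 0 with rfl | hv
  · rw [gaussianReal_zero_var]
    rw [Measure.dirac_apply' _ measurableSet_Ioi]
    simp
  · set a := m + c * Real.sqrt v with ha
    rw [gaussianReal_apply_eq_integral _ hv]
    refine ENNReal.ofReal_le_ofReal ?_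
    have hv0 : (0 : ℝ) < v := lt_of_le_of_ne v.coe_nonneg (by exact_mod_cast (Ne.symm hv))
    have hsv : Real.sqrt v * Real.sqrt v = v := Real.mul_self_sqrt v.coe_nonneg
    have key : ∀ x ∈ Set.Ioi a,
        gaussianPDFReal m v x ≤ rexp (-c^2/2) * gaussianPDFReal a v x := by
      intro x hx
      rw [Set.mem_Ioi] at hx
      have h2 : rexp (-c^2/2) * gaussianPDFReal a v x
          = (√(2 * π * (v:ℝ)))⁻¹ * rexp (-(x - a)^2 / (2*(v:ℝ)) + -c^2/2) := by
        rw [gaussianPDFReal, Real.exp_add]; ring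
      rw [gaussianPDFReal, h2]
      refine mul_le_mul_of_nonneg_left (Real.exp_le_exp.2 ?_) (by positivity)
      have h1 : -(x - a)^2 / (2*(v:ℝ)) + -c^2/2 = (-((x-a)^2 + c^2*v)) / (2*v) := by
        field_simp; ring
      rw [h1, div_le_div_iff_of_pos_right (by positivity : (0:ℝ) < 2*v)]
      have hxm : x - m = (x - a) + c * Real.sqrt v := by rw [ha]; ring
      rw [neg_le_neg_iff, hxm]
      nlinarith [hsv, mul_nonneg (mul_nonneg (le_of_lt (sub_pos.2 hx)) hc)
        (Real.sqrt_nonneg (v:ℝ))]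
    calc ∫ x in Set.Ioi a, gaussianPDFReal m v x
        ≤ ∫ x in Set.Ioi a, rexp (-c^2/2) * gaussianPDFReal a v x :=
          setIntegral_mono_on (integrable_gaussianPDFReal m v).integrableOn
            ((integrable_gaussianPDFReal a v).const_mul _).integrableOn
            measurableSet_Ioi key
      _ = rexp (-c^2/2) * ∫ x in Set.Ioi a, gaussianPDFReal a v x := integral_const_mul _ _
      _ = rexp (-c^2/2) / 2 := by
          rw [integral_gaussianPDFReal_Ioi_self a v hv]; ring

theorem ucb_high_probability_bound
    {Ω : Type*} [MeasurableSpace Ω] (P : Measure Ω) [IsProbabilityMeasure P]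
    {X : Type*} [Fintype X] [Nonempty X]
    (μ : X → ℝ) (σ : X → ℝ) (hσ : ∀ x, 0 ≤ σ x)
    (Z : X → Ω → ℝ)
    (hZ : ∀ x, Measure.map (Z x) P = gaussianReal (μ x) (Real.toNNReal ((σ x) ^ 2)))
    (δ : ℝ) (hδ : δ ∈ Set.Ioo (0 : ℝ) 1) (hδX : 2 * δ < (Fintype.card X : ℝ)) :
    ENNReal.ofReal (1 - δ) ≤
      P {ω | ∀ x, Z x ω ≤ μ x + Real.sqrt (2 * Real.log ((Fintype.card X : ℝ) / (2 * δ))) * σ x} := by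
  obtain ⟨hδ0, hδ1⟩ := hδ
  set c := Real.sqrt (2 * Real.log ((Fintype.card X : ℝ) / (2 * δ))) with hcdef
  have hcardpos : (0:ℝ) < (Fintype.card X : ℝ) := by positivity -- wrong? card > 0 since Nonempty
  have hcard1 : (1:ℝ) < (Fintype.card X : ℝ) / (2 * δ) := by
    rw [lt_div_iff₀ (by positivity)]; linarith
  have hlog : 0 < Real.log ((Fintype.card X : ℝ) / (2 * δ)) := Real.log_pos hcard1
  have hc0 : 0 ≤ c := Real.sqrt_nonneg _
  have hc2 : c^2 = 2 * Real.log ((Fintype.card X : ℝ) / (2 * δ)) :=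
    Real.sq_sqrt (by positivity)
  have hexp : rexp (-c^2/2) / 2 = δ / (Fintype.card X : ℝ) := by
    rw [hc2, show -(2 * Real.log ((Fintype.card X : ℝ) / (2 * δ)))/2
        = - Real.log ((Fintype.card X : ℝ) / (2 * δ)) by ring,
      Real.exp_neg, Real.exp_log (by positivity)]
    rw [inv_div]
    field_simp
  have haem : ∀ x, AEMeasurable (Z x) P := by
    intro x
    by_contra h
    have h1 := hZ x
    rw [Measure.map_of_not_aemeasurable h] at h1
    have h2 : (gaussianReal (μ x) (Real.toNNReal ((σ x) ^ 2))) Set.univ = 1 := measure_univ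
    rw [← h1] at h2
    simp at h2
  have hsv : ∀ x, Real.sqrt ((Real.toNNReal ((σ x)^2) : ℝ≥0) : ℝ) = σ x := by
    intro x
    rw [Real.coe_toNNReal _ (sq_nonneg _)]
    exact Real.sqrt_sq (hσ x)
  have harm : ∀ x, P (Z x ⁻¹' Set.Ioi (μ x + c * σ x)) ≤
      ENNReal.ofReal (δ / (Fintype.card X : ℝ)) := by
    intro x
    rw [← Measure.map_apply_of_aemeasurable (haem x) measurableSet_Ioi, hZ x, ← hexp]
    have h := gaussian_tail_bound (μ x) (Real.toNNReal ((σ x)^2)) c hc0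
    rwa [hsv x] at h
  set bad := ⋃ x, Z x ⁻¹' Set.Ioi (μ x + c * σ x) with hbaddef
  have hbadnull : NullMeasurableSet bad P :=
    NullMeasurableSet.iUnion fun x =>
      (haem x).nullMeasurable measurableSet_Ioi
  have hbad : P bad ≤ ENNReal.ofReal δ := by
    calc P bad ≤ ∑' x, P (Z x ⁻¹' Set.Ioi (μ x + c * σ x)) := measure_iUnion_le _
      _ = ∑ x, P (Z x ⁻¹' Set.Ioi (μ x + c * σ x)) := tsum_fintype _
      _ ≤ ∑ _x : X, ENNReal.ofReal (δ / (Fintype.card X : ℝ)) :=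
          Finset.sum_le_sum fun x _ => harm x
      _ = (Fintype.card X : ℝ≥0∞) * ENNReal.ofReal (δ / (Fintype.card X : ℝ)) := by
          rw [Finset.sum_const, Finset.card_univ, nsmul_eq_mul]
      _ = ENNReal.ofReal δ := by
          rw [← ENNReal.ofReal_natCast (Fintype.card X),
            ← ENNReal.ofReal_mul (by positivity)]
          congr 1
          field_simp
  have hgood : {ω | ∀ x, Z x ω ≤ μ x + c * σ x} = badᶜ := by
    ext ω
    simp [hbaddef, not_lt]
  rw [hgood, measure_compl₀ hbadnull (measure_ne_top P _), measure_univ]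
  calc ENNReal.ofReal (1 - δ) = 1 - ENNReal.ofReal δ := by
        rw [ENNReal.ofReal_sub _ hδ0.le, ENNReal.ofReal_one]
    _ ≤ 1 - P bad := tsub_le_tsub_left hbad 1
end

section
/- Let (Ω, P) be a probability space, X a finite nonempty index set, and for each x ∈ X let Z_x : Ω → ℝ be a random variable whose law is the Gaussian distribution N(μ_x, σ_x²), where μ_x ∈ ℝ and σ_x ≥ 0. Fix δ ∈ (0,1) with 2δ < |X|, and set β_δ = 2·log(|X|/(2δ)). Let W = max_{x ∈ X} Z_x. Then the (1−δ)-quantile of W satisfies inf{ w ∈ ℝ : P(W ≤ w) ≥ 1 − δ } ≤ max_{x ∈ X} ( μ_x + √β_δ · σ_x ). -/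
open MeasureTheory ProbabilityTheory Real Set Filter Topology
open scoped ENNReal NNReal

/-!
By the Gaussian tail bound `N(0,1)(t, ∞) ≤ exp (-t² / 2) / 2` for `t ≥ 0`, each `Z x` exceeds
`μ x + √β σ x` with probability at most `exp (-β / 2) / 2 = δ / |X|`. A union bound shows that `W`
exceeds `w₀ = max_x (μ x + √β σ x)` with probability at most `δ`, so `w₀` belongs to the set whose
infimum is the quantile. That set is bounded below since `W ≥ Z x₀`, whose distribution function
tends to `0` at `-∞`.
-/

lemma setIntegral_Ioi_zero_gaussianPDFReal_zero_one :
    ∫ x in Ioi 0, gaussianPDFReal 0 1 x = 1 / 2 := by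
  have h := integral_gaussian_Ioi (1 / 2)
  simp only [gaussianPDFReal, NNReal.coe_one, mul_one, sub_zero, integral_const_mul]
  rw [show π / (1 / 2) = 2 * π by ring] at h
  simp_rw [show ∀ x : ℝ, -x ^ 2 / 2 = -(1 / 2) * x ^ 2 from fun x => by ring]
  rw [h]
  field_simp

/-- Moving the mean from `0` to `-t` multiplies the density at `x` by `exp (-t x - t² / 2)`. -/
lemma gaussianPDFReal_neg_le {t x : ℝ} (ht : 0 ≤ t) (hx : 0 ≤ x) :
    gaussianPDFReal (-t) 1 x ≤ exp (-t ^ 2 / 2) * gaussianPDFReal 0 1 x := by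
  simp only [gaussianPDFReal, NNReal.coe_one, mul_one, sub_zero, sub_neg_eq_add]
  rw [mul_left_comm, ← exp_add]
  gcongr
  nlinarith [mul_nonneg ht hx]

lemma gaussianReal_neg_one_Ioi_zero_le {t : ℝ} (ht : 0 ≤ t) :
    gaussianReal (-t) 1 (Ioi 0) ≤ ENNReal.ofReal (exp (-t ^ 2 / 2) / 2) := by
  rw [gaussianReal_apply_eq_integral _ one_ne_zero]
  refine ENNReal.ofReal_le_ofReal ?_
  calc ∫ x in Ioi 0, gaussianPDFReal (-t) 1 x
      ≤ ∫ x in Ioi 0, exp (-t ^ 2 / 2) * gaussianPDFReal 0 1 x :=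
        setIntegral_mono_on (integrable_gaussianPDFReal _ _).integrableOn
          ((integrable_gaussianPDFReal _ _).integrableOn.const_mul _) measurableSet_Ioi
          fun x hx => gaussianPDFReal_neg_le ht (le_of_lt hx)
    _ = exp (-t ^ 2 / 2) / 2 := by
        rw [integral_const_mul, setIntegral_Ioi_zero_gaussianPDFReal_zero_one]; ring

lemma gaussianReal_map_standardize {m σ : ℝ} (hσ : 0 < σ) (t : ℝ) :
    (gaussianReal m (σ ^ 2).toNNReal).map (fun x => (x - m) / σ - t) = gaussianReal (-t) 1 := by
  rw [show (fun x => (x - m) / σ - t) = (· - t) ∘ (· / σ) ∘ (· - m) from rfl,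
    ← Measure.map_map (by fun_prop) (by fun_prop), ← Measure.map_map (by fun_prop) (by fun_prop),
    gaussianReal_map_sub_const, gaussianReal_map_div_const, gaussianReal_map_sub_const]
  congr 1
  · simp
  · ext; simp [Real.coe_toNNReal _ (sq_nonneg σ), hσ.ne']

lemma gaussianReal_Ioi_add_mul_le {m σ t : ℝ} (hσ : 0 ≤ σ) (ht : 0 ≤ t) :
    gaussianReal m (σ ^ 2).toNNReal (Ioi (m + t * σ)) ≤ ENNReal.ofReal (exp (-t ^ 2 / 2) / 2) := by
  rcases hσ.eq_or_lt with rfl | hσ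
  · simp [gaussianReal_zero_var]
  have hpre : (fun x => (x - m) / σ - t) ⁻¹' Ioi 0 = Ioi (m + t * σ) := by
    ext x
    simp only [mem_preimage, mem_Ioi, sub_pos, lt_div_iff₀ hσ]
    constructor <;> intro h <;> linarith
  rw [← hpre, ← Measure.map_apply (by fun_prop) measurableSet_Ioi, gaussianReal_map_standardize hσ]
  exact gaussianReal_neg_one_Ioi_zero_le ht

section

variable {Ω : Type*} [MeasurableSpace Ω] {P : Measure Ω}

lemma measure_sup'_lt_sup'_le_sum {ι α : Type*} [LinearOrder α] {s : Finset ι} (hs : s.Nonempty)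
    (c : ι → α) (Z : ι → Ω → α) :
    P {ω | s.sup' hs c < s.sup' hs (Z · ω)} ≤ ∑ i ∈ s, P {ω | c i < Z i ω} := by
  refine (measure_mono fun ω hω => ?_).trans (measure_biUnion_finset_le s _)
  obtain ⟨i, hi, hlt⟩ := (Finset.lt_sup'_iff hs).1 hω
  exact mem_biUnion hi ((Finset.le_sup' c hi).trans_lt hlt)

lemma one_sub_le_measure_of_measure_compl_le [IsProbabilityMeasure P] {s : Set Ω} {ε : ℝ≥0∞}
    (h : P sᶜ ≤ ε) : 1 - ε ≤ P s := by
  rw [tsub_le_iff_right, ← measure_univ (μ := P), ← union_compl_self s]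
  exact (measure_union_le _ _).trans (by gcongr)

lemma bddBelow_setOf_le_measure_le [IsProbabilityMeasure P] {Y W : Ω → ℝ} (hY : AEMeasurable Y P)
    (hYW : ∀ ω, Y ω ≤ W ω) {c : ℝ≥0∞} (hc : 0 < c) : BddBelow {w | c ≤ P {ω | W ω ≤ w}} := by
  have hcdf : Tendsto (fun w => P {ω | Y ω ≤ w}) atBot (𝓝 0) := by
    have : IsProbabilityMeasure (P.map Y) := Measure.isProbabilityMeasure_map hY
    have hlaw : ∀ w, P {ω | Y ω ≤ w} = ENNReal.ofReal (cdf (P.map Y) w) := fun w => by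
      rw [ofReal_cdf, Measure.map_apply_of_aemeasurable hY measurableSet_Iic]; rfl
    simpa only [hlaw, ENNReal.ofReal_zero] using
      ENNReal.tendsto_ofReal (tendsto_cdf_atBot (P.map Y))
  obtain ⟨w₀, hw₀⟩ := eventually_atBot.1 ((tendsto_order.1 hcdf).2 c hc)
  refine ⟨w₀, fun w hw => le_of_not_gt fun hlt => ?_⟩
  have hsub : {ω | W ω ≤ w} ⊆ {ω | Y ω ≤ w} := fun ω hω => (hYW ω).trans hω
  exact (hw.trans (measure_mono hsub)).not_gt (hw₀ w hlt.le)

lemma ProbabilityTheory.HasLaw.measure_add_mul_lt_le_of_gaussianReal {Y : Ω → ℝ} {m σ t : ℝ}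
    (hY : HasLaw Y (gaussianReal m (σ ^ 2).toNNReal) P) (hσ : 0 ≤ σ) (ht : 0 ≤ t) :
    P {ω | m + t * σ < Y ω} ≤ ENNReal.ofReal (exp (-t ^ 2 / 2) / 2) := by
  have h := gaussianReal_Ioi_add_mul_le (m := m) hσ ht
  rwa [← hY.map_eq, Measure.map_apply_of_aemeasurable hY.aemeasurable measurableSet_Ioi] at h

end

lemma exp_neg_sq_sqrt_two_mul_log_div_two {a : ℝ} (ha : 1 ≤ a) :
    exp (-√(2 * log a) ^ 2 / 2) = a⁻¹ := by
  rw [sq_sqrt (by have := log_nonneg ha; positivity), neg_div, mul_div_cancel_left₀ _ two_ne_zero,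
    exp_neg, exp_log (by positivity)]

theorem quantile_of_max_gaussian_bound
    {Ω : Type*} [MeasurableSpace Ω] (P : Measure Ω) [IsProbabilityMeasure P]
    {X : Type*} [Fintype X] [Nonempty X]
    (μ : X → ℝ) (σ : X → ℝ) (hσ : ∀ x, 0 ≤ σ x)
    (Z : X → Ω → ℝ)
    (hZ : ∀ x, Measure.map (Z x) P = gaussianReal (μ x) (Real.toNNReal ((σ x) ^ 2)))
    (δ : ℝ) (hδ : δ ∈ Set.Ioo (0 : ℝ) 1) (hδX : 2 * δ < (Fintype.card X : ℝ))
    (β : ℝ) (hβ : β = 2 * Real.log ((Fintype.card X : ℝ) / (2 * δ)))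
    (W : Ω → ℝ)
    (hW : ∀ ω, W ω = Finset.univ.sup' Finset.univ_nonempty (fun x => Z x ω)) :
    sInf {w : ℝ | ENNReal.ofReal (1 - δ) ≤ P {ω | W ω ≤ w}} ≤
      Finset.univ.sup' Finset.univ_nonempty (fun x => μ x + Real.sqrt β * σ x) := by
  obtain ⟨hδ0, hδ1⟩ := hδ
  set n : ℝ := (Fintype.card X : ℝ)
  have hn : 0 < n := by positivity
  have hlaw : ∀ x, HasLaw (Z x) (gaussianReal (μ x) (σ x ^ 2).toNNReal) P :=
    fun x => ⟨aemeasurable_of_map_neZero (by rw [hZ x]; infer_instance), hZ x⟩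
  have htail : ∀ x, P {ω | μ x + √β * σ x < Z x ω} ≤ ENNReal.ofReal (δ / n) := fun x => by
    have hratio : 1 ≤ n / (2 * δ) := (one_le_div (by positivity)).2 hδX.le
    convert (hlaw x).measure_add_mul_lt_le_of_gaussianReal (hσ x) (sqrt_nonneg β) using 2
    rw [hβ, exp_neg_sq_sqrt_two_mul_log_div_two hratio]
    field_simp
  set w₀ := Finset.univ.sup' Finset.univ_nonempty (fun x => μ x + √β * σ x)
  have hexceed : P {ω | W ω ≤ w₀}ᶜ ≤ ENNReal.ofReal δ := calc
    _ = P {ω | w₀ < Finset.univ.sup' Finset.univ_nonempty (Z · ω)} := by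
      simp only [compl_ofPred, not_le, hW]
    _ ≤ ∑ x, P {ω | μ x + √β * σ x < Z x ω} := measure_sup'_lt_sup'_le_sum _ _ Z
    _ ≤ ∑ _x : X, ENNReal.ofReal (δ / n) := Finset.sum_le_sum fun x _ => htail x
    _ = ENNReal.ofReal δ := by
      rw [Finset.sum_const, Finset.card_univ, nsmul_eq_mul, ← ENNReal.ofReal_natCast,
        ← ENNReal.ofReal_mul (Nat.cast_nonneg _), mul_div_cancel₀ _ hn.ne']
  obtain ⟨x₀⟩ := ‹Nonempty X›
  refine csInf_le (bddBelow_setOf_le_measure_le (hlaw x₀).aemeasurable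
    (fun ω => hW ω ▸ Finset.le_sup' (Z · ω) (Finset.mem_univ x₀)) (by simpa using hδ1)) ?_
  rw [ENNReal.ofReal_sub _ hδ0.le, ENNReal.ofReal_one]
  exact one_sub_le_measure_of_measure_compl_le hexceed
end

section
/- Let W be an integrable real random variable and let c : (0,1) → ℝ be Lebesgue-integrable on (0,1). Suppose that for every δ ∈ (0,1), P(W ≤ c(δ)) ≥ 1 − δ. Then E[W] ≤ ∫₀¹ c(δ) dδ. -/
/-!
Let `Q` be the quantile function of the law `μ` of `W`. Inverse transform sampling says that `Q`
pushes Lebesgue measure on `(0,1)` forward to `μ`, so `E[W] = ∫₀¹ Q(p) dp`. The hypothesis at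
level `δ` says `cdf μ (c δ) ≥ 1 - δ`, i.e. `Q(1 - δ) ≤ c δ`; integrating and substituting
`p = 1 - δ` gives the bound.
-/

open MeasureTheory ProbabilityTheory Real Set

namespace ProbabilityTheory

/-- The left-continuous generalized inverse of `cdf μ`. Only its values on `(0, 1)` matter: for
`p ≤ 0` the set is unbounded below and for `p ≥ 1` it may be empty, and `sInf` returns junk. -/
noncomputable def quantile (μ : Measure ℝ) (p : ℝ) : ℝ := sInf {x | p ≤ cdf μ x}

section Quantile

variable {μ : Measure ℝ} {p : ℝ}

lemma nonempty_setOf_le_cdf (hp : p < 1) : {x | p ≤ cdf μ x}.Nonempty :=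
  ((tendsto_cdf_atTop μ).eventually (eventually_ge_nhds hp)).exists

lemma bddBelow_setOf_le_cdf (hp : 0 < p) : BddBelow {x | p ≤ cdf μ x} := by
  obtain ⟨x₀, hx₀⟩ := ((tendsto_cdf_atBot μ).eventually (eventually_lt_nhds hp)).exists
  refine ⟨x₀, fun x hx => ?_⟩
  by_contra! hlt
  exact (hx.trans (monotone_cdf μ hlt.le)).not_gt hx₀

lemma le_cdf_quantile [IsProbabilityMeasure μ] (hp : p < 1) : p ≤ cdf μ (quantile μ p) := by
  have hcont : ContinuousWithinAt (cdf μ) (Ioi (quantile μ p)) (quantile μ p) :=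
    ((cdf μ).right_continuous _).mono Ioi_subset_Ici_self
  refine ge_of_tendsto hcont ?_
  filter_upwards [self_mem_nhdsWithin] with y hy
  obtain ⟨x, hx, hxy⟩ := exists_lt_of_csInf_lt (nonempty_setOf_le_cdf hp) hy
  exact hx.trans (monotone_cdf μ hxy.le)

lemma quantile_le_iff [IsProbabilityMeasure μ] (hp : p ∈ Ioo 0 1) {x : ℝ} :
    quantile μ p ≤ x ↔ p ≤ cdf μ x :=
  ⟨fun h => (le_cdf_quantile hp.2).trans (monotone_cdf μ h),
    fun h => csInf_le (bddBelow_setOf_le_cdf hp.1) h⟩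

lemma monotoneOn_quantile [IsProbabilityMeasure μ] : MonotoneOn (quantile μ) (Ioo 0 1) :=
  fun _ hp _ hq hpq => csInf_le_csInf (bddBelow_setOf_le_cdf hp.1) (nonempty_setOf_le_cdf hq.2)
    fun _ hx => hpq.trans hx

lemma aemeasurable_quantile [IsProbabilityMeasure μ] :
    AEMeasurable (quantile μ) (volume.restrict (Ioo 0 1)) :=
  aemeasurable_restrict_of_monotoneOn measurableSet_Ioo monotoneOn_quantile

end Quantile

lemma volume_restrict_Ioo_zero_one_Iic {y : ℝ} (hy : y ≤ 1) :
    volume.restrict (Ioo 0 1) (Iic y) = ENNReal.ofReal y := by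
  rw [Measure.restrict_congr_set Ioo_ae_eq_Ioc, Measure.restrict_apply measurableSet_Iic,
    inter_comm, Ioc_inter_Iic, inf_eq_right.mpr hy, Real.volume_Ioc, sub_zero]

theorem map_quantile_volume_restrict_Ioo (μ : Measure ℝ) [IsProbabilityMeasure μ] :
    (volume.restrict (Ioo 0 1)).map (quantile μ) = μ := by
  refine Measure.ext_of_Iic _ _ fun x => ?_
  have hpre : quantile μ ⁻¹' Iic x ∩ Ioo 0 1 = Iic (cdf μ x) ∩ Ioo 0 1 := by
    ext p
    simp only [mem_inter_iff, mem_preimage, mem_Iic, and_congr_left_iff]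
    exact fun hp => quantile_le_iff hp
  rw [Measure.map_apply_of_aemeasurable aemeasurable_quantile measurableSet_Iic,
    Measure.restrict_apply' measurableSet_Ioo, hpre, ← Measure.restrict_apply' measurableSet_Ioo,
    volume_restrict_Ioo_zero_one_Iic (cdf_le_one μ x), ofReal_cdf]

lemma setIntegral_quantile (μ : Measure ℝ) [IsProbabilityMeasure μ] :
    ∫ p in Ioo 0 1, quantile μ p = ∫ x, x ∂μ := by
  conv_rhs => rw [← map_quantile_volume_restrict_Ioo μ]
  exact (integral_map aemeasurable_quantile aestronglyMeasurable_id).symm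

lemma integrableOn_quantile {μ : Measure ℝ} [IsProbabilityMeasure μ] (hμ : Integrable id μ) :
    IntegrableOn (quantile μ) (Ioo 0 1) := by
  rw [← map_quantile_volume_restrict_Ioo μ] at hμ
  exact (integrable_map_measure aestronglyMeasurable_id aemeasurable_quantile).mp hμ

lemma measurePreserving_one_sub_volume_restrict_Ioo :
    MeasurePreserving (fun p : ℝ => 1 - p) (volume.restrict (Ioo 0 1))
      (volume.restrict (Ioo 0 1)) := by
  have h := (Measure.measurePreserving_sub_left volume (1 : ℝ)).restrict_preimage_emb
    (MeasurableEquiv.subLeft (1 : ℝ)).measurableEmbedding (Ioo 0 1)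
  rwa [preimage_const_sub_Ioo, sub_zero, sub_self] at h

theorem integral_le_setIntegral_of_le_measure_Iic {μ : Measure ℝ} [IsProbabilityMeasure μ]
    (hμ : Integrable id μ) {c : ℝ → ℝ} (hc : IntegrableOn c (Ioo 0 1))
    (h : ∀ δ ∈ Ioo (0 : ℝ) 1, ENNReal.ofReal (1 - δ) ≤ μ (Iic (c δ))) :
    ∫ x, x ∂μ ≤ ∫ δ in Ioo 0 1, c δ := by
  have hreflect := measurePreserving_one_sub_volume_restrict_Ioo
  have hemb : MeasurableEmbedding (fun p : ℝ => 1 - p) :=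
    (MeasurableEquiv.subLeft (1 : ℝ)).measurableEmbedding
  have hbound : ∀ δ ∈ Ioo (0 : ℝ) 1, quantile μ (1 - δ) ≤ c δ := by
    intro δ hδ
    have hδ' : 1 - δ ∈ Ioo (0 : ℝ) 1 := ⟨by linarith [hδ.2], by linarith [hδ.1]⟩
    rw [quantile_le_iff hδ', ← ENNReal.ofReal_le_ofReal_iff (cdf_nonneg μ _), ofReal_cdf]
    exact h δ hδ
  calc ∫ x, x ∂μ = ∫ p in Ioo 0 1, quantile μ p := (setIntegral_quantile μ).symm
    _ = ∫ δ in Ioo 0 1, quantile μ (1 - δ) := (hreflect.integral_comp hemb _).symm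
    _ ≤ ∫ δ in Ioo 0 1, c δ :=
      setIntegral_mono_on ((hreflect.integrable_comp_emb hemb).mpr (integrableOn_quantile hμ))
        hc measurableSet_Ioo hbound

end ProbabilityTheory

theorem expectation_le_integral_of_quantile_bounds
    {Ω : Type*} [MeasurableSpace Ω] (P : Measure Ω) [IsProbabilityMeasure P]
    (W : Ω → ℝ) (hW : Integrable W P)
    (c : ℝ → ℝ) (hc : IntegrableOn c (Set.Ioo (0 : ℝ) 1))
    (h : ∀ δ ∈ Set.Ioo (0 : ℝ) 1, ENNReal.ofReal (1 - δ) ≤ P {ω | W ω ≤ c δ}) :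
    ∫ ω, W ω ∂P ≤ ∫ δ in Set.Ioo (0 : ℝ) 1, c δ := by
  have hWm : AEMeasurable W P := hW.aemeasurable
  have : IsProbabilityMeasure (P.map W) := Measure.isProbabilityMeasure_map hWm
  have hlaw : ∀ δ ∈ Ioo (0 : ℝ) 1, ENNReal.ofReal (1 - δ) ≤ P.map W (Iic (c δ)) := fun δ hδ => by
    rw [Measure.map_apply_of_aemeasurable hWm measurableSet_Iic]
    exact h δ hδ
  calc ∫ ω, W ω ∂P = ∫ x, x ∂P.map W := (integral_map hWm aestronglyMeasurable_id).symm
    _ ≤ ∫ δ in Ioo 0 1, c δ := integral_le_setIntegral_of_le_measure_Iic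
      ((integrable_map_measure aestronglyMeasurable_id hWm).mpr hW) hc hlaw
end

section
/- For every real A ≥ 1 and b > 0, ∫₀^∞ min{ 1, A·exp(−(t/b)²) } dt ≤ b·√(log A) + b·√π/2. -/
open MeasureTheory Real Set

/-! Up to `t₀ = b √(log A)` bound the integrand by `1`. Beyond `t₀`, writing `A = exp s²` with
`s = t₀ / b`, one has `s² - u² ≤ -(u - s)²` for `u ≥ s ≥ 0`, so the integrand is dominated by the
Gaussian `exp (-((t - t₀) / b)²)` shifted to start at `t₀`, whose integral is `b √π / 2`. -/

lemma setIntegral_Ici_min_one_le {f : ℝ → ℝ} (hf : IntegrableOn f (Ioi 0)) {t₀ : ℝ}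
    (ht₀ : 0 ≤ t₀) : ∫ t in Ici 0, min 1 (f t) ≤ t₀ + ∫ t in Ioi t₀, f t := by
  have hmin : IntegrableOn (fun t ↦ min 1 (f t)) (Ioi 0) :=
    Integrable.mono hf (aestronglyMeasurable_const.inf hf.aestronglyMeasurable) <|
      .of_forall fun t ↦ by
        rcases le_total (f t) 1 with h | h
        · rw [min_eq_right h]
        · rw [min_eq_left h, norm_one]
          exact h.trans (le_norm_self _)
  rw [integral_Ici_eq_integral_Ioi, ← Ioc_union_Ioi_eq_Ioi ht₀,
    setIntegral_union (Ioc_disjoint_Ioi le_rfl) measurableSet_Ioi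
      (hmin.mono_set Ioc_subset_Ioi_self) (hmin.mono_set (Ioi_subset_Ioi ht₀))]
  refine add_le_add ?_ ?_
  · calc ∫ t in Ioc 0 t₀, min 1 (f t) ≤ ∫ _ in Ioc 0 t₀, (1 : ℝ) :=
          setIntegral_mono_on (hmin.mono_set Ioc_subset_Ioi_self)
            (integrableOn_const measure_Ioc_lt_top.ne) measurableSet_Ioc
            fun _ _ ↦ min_le_left _ _
      _ = t₀ := by simp [ht₀]
  · exact setIntegral_mono_on (hmin.mono_set (Ioi_subset_Ioi ht₀))
      (hf.mono_set (Ioi_subset_Ioi ht₀)) measurableSet_Ioi fun _ _ ↦ min_le_right _ _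

lemma setIntegral_Ioi_comp_sub_right {E : Type*} [NormedAddCommGroup E] [NormedSpace ℝ E]
    (f : ℝ → E) (c : ℝ) :
    ∫ t in Ioi c, f (t - c) = ∫ t in Ioi 0, f t := by
  rw [← (measurePreserving_add_right volume c).setIntegral_preimage_emb
    (measurableEmbedding_addRight c)]
  simp only [preimage_add_const_Ioi, sub_self, add_sub_cancel_right]

lemma integrable_exp_neg_div_sq {b : ℝ} (hb : b ≠ 0) :
    Integrable fun t ↦ exp (-(t / b) ^ 2) := by
  convert integrable_exp_neg_mul_sq (b := (b ^ 2)⁻¹) (by positivity) using 3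
  ring

lemma integral_Ioi_exp_neg_div_sq {b : ℝ} (hb : 0 < b) :
    ∫ t in Ioi 0, exp (-(t / b) ^ 2) = b * √π / 2 := by
  have h (t : ℝ) : -(t / b) ^ 2 = -(b ^ 2)⁻¹ * t ^ 2 := by ring
  simp only [h, integral_gaussian_Ioi, div_inv_eq_mul]
  rw [sqrt_mul' _ (sq_nonneg b), sqrt_sq hb.le, mul_comm]

lemma exp_sq_mul_exp_neg_sq_le {s u : ℝ} (hs : 0 ≤ s) (hsu : s ≤ u) :
    exp (s ^ 2) * exp (-u ^ 2) ≤ exp (-(u - s) ^ 2) := by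
  rw [← exp_add, exp_le_exp]
  nlinarith

theorem integral_min_one_gaussian_tail_bound
    (A b : ℝ) (hA : 1 ≤ A) (hb : 0 < b) :
    ∫ t in Set.Ici (0 : ℝ), min 1 (A * Real.exp (-(t / b) ^ 2)) ≤
      b * Real.sqrt (Real.log A) + b * Real.sqrt π / 2 := by
  set s := √(log A)
  have hs : 0 ≤ s := sqrt_nonneg _
  have hA_eq : A = exp (s ^ 2) := by rw [sq_sqrt (log_nonneg hA), exp_log (by linarith)]
  have hgauss := integrable_exp_neg_div_sq hb.ne'
  have htail : ∀ t ∈ Ioi (b * s), A * exp (-(t / b) ^ 2) ≤ exp (-((t - b * s) / b) ^ 2) := by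
    intro t ht
    have hst : s ≤ t / b := (le_div_iff₀' hb).2 (le_of_lt ht)
    rw [hA_eq, sub_div, mul_div_cancel_left₀ _ hb.ne']
    exact exp_sq_mul_exp_neg_sq_le hs hst
  calc ∫ t in Ici 0, min 1 (A * exp (-(t / b) ^ 2))
      ≤ b * s + ∫ t in Ioi (b * s), A * exp (-(t / b) ^ 2) :=
        setIntegral_Ici_min_one_le (hgauss.const_mul A).integrableOn (by positivity)
    _ ≤ b * s + ∫ t in Ioi (b * s), exp (-((t - b * s) / b) ^ 2) :=
        add_le_add le_rfl (setIntegral_mono_on (hgauss.const_mul A).integrableOn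
          (hgauss.comp_sub_right _).integrableOn measurableSet_Ioi htail)
    _ = b * s + b * √π / 2 := by
        rw [setIntegral_Ioi_comp_sub_right (fun t ↦ exp (-(t / b) ^ 2)),
          integral_Ioi_exp_neg_div_sq hb]
end

section
/- Let (Ω, P) be a probability space, let Z : Ω → ℝ be a random variable whose law is the Gaussian distribution N(μ, σ²) with μ ∈ ℝ and σ ≥ 0, and let ζ : Ω → ℝ be a nonnegative random variable independent of Z such that exp(−ζ/2) is integrable. Then E[ max(0, Z − μ − √ζ · σ) ] ≤ (σ/√(2π)) · E[ exp(−ζ/2) ]. -/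
open MeasureTheory ProbabilityTheory Real Filter Set Topology

/-! Conditionally on `ζ = t`, the integrand is `σ (X - √t)⁺` with `X` standard normal. For
`c ≥ 0`, `E[(X - c)⁺] ≤ ∫_{x > c} x φ(x) dx = φ(c)` because `-φ` is an antiderivative of
`x φ(x)`, and `σ φ(√t) = σ / √(2π) · exp (-t / 2)`. Independence lets us integrate this bound
against the law of `ζ`. -/

lemma gaussianPDFReal_zero_one (x : ℝ) :
    gaussianPDFReal 0 1 x = (√(2 * π))⁻¹ * exp (-x ^ 2 / 2) := by
  simp [gaussianPDFReal]

lemma gaussianPDFReal_zero_one_eq :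
    gaussianPDFReal 0 1 = fun x => (√(2 * π))⁻¹ * exp (-x ^ 2 / 2) :=
  funext gaussianPDFReal_zero_one

lemma hasDerivAt_gaussianPDFReal_zero_one (x : ℝ) :
    HasDerivAt (gaussianPDFReal 0 1) (-(x * gaussianPDFReal 0 1 x)) x := by
  have hsq : HasDerivAt (fun y : ℝ => -y ^ 2 / 2) (-x) x :=
    ((hasDerivAt_pow 2 x).neg.div_const 2).congr_deriv (by ring)
  rw [gaussianPDFReal_zero_one_eq]
  exact (hsq.exp.const_mul _).congr_deriv (by ring)

lemma tendsto_gaussianPDFReal_zero_one_atTop :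
    Tendsto (gaussianPDFReal 0 1) atTop (𝓝 0) := by
  have hsq : Tendsto (fun y : ℝ => -y ^ 2 / 2) atTop atBot :=
    (tendsto_neg_atTop_atBot.comp (tendsto_pow_atTop two_ne_zero)).atBot_div_const two_pos
  rw [gaussianPDFReal_zero_one_eq, ← mul_zero (√(2 * π))⁻¹]
  exact (tendsto_exp_atBot.comp hsq).const_mul _

lemma integrable_id_mul_gaussianPDFReal_zero_one :
    Integrable (fun x : ℝ => x * gaussianPDFReal 0 1 x) := by
  convert (integrable_mul_exp_neg_mul_sq (b := 1 / 2) (by norm_num)).const_mul (√(2 * π))⁻¹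
    using 2 with x
  rw [gaussianPDFReal_zero_one]; ring_nf

lemma integral_Ioi_id_mul_gaussianPDFReal_zero_one (c : ℝ) :
    ∫ x in Ioi c, x * gaussianPDFReal 0 1 x = gaussianPDFReal 0 1 c := by
  have h := integral_Ioi_of_hasDerivAt_of_tendsto' (a := c) (m := 0)
    (f := fun x => -gaussianPDFReal 0 1 x)
    (fun x _ => (hasDerivAt_gaussianPDFReal_zero_one x).neg.congr_deriv (neg_neg _))
    integrable_id_mul_gaussianPDFReal_zero_one.integrableOn
    (by simpa using tendsto_gaussianPDFReal_zero_one_atTop.neg)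
  simpa using h

lemma integral_max_zero_sub_gaussianReal_zero_one_le {c : ℝ} (hc : 0 ≤ c) :
    ∫ x, max 0 (x - c) ∂gaussianReal 0 1 ≤ gaussianPDFReal 0 1 c := by
  have hle : ∀ x, gaussianPDFReal 0 1 x • max 0 (x - c)
      ≤ (Ioi c).indicator (fun x => x * gaussianPDFReal 0 1 x) x := by
    intro x
    have hpdf := gaussianPDFReal_nonneg 0 1 x
    by_cases hx : x ∈ Ioi c
    · rw [indicator_of_mem hx, max_eq_right (sub_nonneg.mpr (le_of_lt hx)), smul_eq_mul]
      nlinarith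
    · rw [indicator_of_notMem hx, max_eq_left (sub_nonpos.mpr (not_lt.mp hx)), smul_zero]
  rw [integral_gaussianReal_eq_integral_smul one_ne_zero,
    ← integral_Ioi_id_mul_gaussianPDFReal_zero_one c, ← integral_indicator measurableSet_Ioi]
  refine integral_mono_of_nonneg (ae_of_all _ fun x => ?_)
    (integrable_id_mul_gaussianPDFReal_zero_one.indicator measurableSet_Ioi) (ae_of_all _ hle)
  exact smul_nonneg (gaussianPDFReal_nonneg 0 1 x) (le_max_left _ _)

lemma gaussianReal_eq_map_gaussianReal_zero_one (μ σ : ℝ) :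
    gaussianReal μ (σ ^ 2).toNNReal = (gaussianReal 0 1).map (fun x => σ * x + μ) := by
  change _ = (gaussianReal 0 1).map ((· + μ) ∘ (σ * ·))
  rw [← Measure.map_map (measurable_add_const μ) (measurable_const_mul σ),
    gaussianReal_map_const_mul, gaussianReal_map_add_const]
  congr 1
  · ring
  · ext; simp [sq_nonneg]

lemma integral_max_zero_sub_sqrt_mul_gaussianReal_le (μ : ℝ) {σ t : ℝ} (hσ : 0 ≤ σ)
    (ht : 0 ≤ t) :
    ∫ z, max 0 (z - μ - √t * σ) ∂gaussianReal μ (σ ^ 2).toNNReal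
      ≤ σ / √(2 * π) * exp (-t / 2) := by
  have hscale : ∀ x, max 0 (σ * x + μ - μ - √t * σ) = σ * max 0 (x - √t) := fun x => by
    rw [mul_max_of_nonneg _ _ hσ, mul_zero]; ring_nf
  rw [gaussianReal_eq_map_gaussianReal_zero_one,
    integral_map (by fun_prop) (by fun_prop : Continuous _).aestronglyMeasurable]
  simp_rw [hscale]
  rw [integral_const_mul]
  calc σ * ∫ x, max 0 (x - √t) ∂gaussianReal 0 1 ≤ σ * gaussianPDFReal 0 1 √t := by
        gcongr
        exact integral_max_zero_sub_gaussianReal_zero_one_le (sqrt_nonneg t)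
    _ = σ / √(2 * π) * exp (-t / 2) := by
        rw [gaussianPDFReal_zero_one, sq_sqrt ht]; ring

lemma ProbabilityTheory.IndepFun.integral_comp_eq_integral_integral
    {Ω α β E : Type*} [MeasurableSpace Ω] [MeasurableSpace α] [MeasurableSpace β]
    [NormedAddCommGroup E] [NormedSpace ℝ E] [CompleteSpace E]
    {P : Measure Ω} [IsFiniteMeasure P] {X : Ω → α} {Y : Ω → β}
    (hXY : IndepFun X Y P) (hX : AEMeasurable X P) (hY : AEMeasurable Y P)
    {g : α × β → E} (hg : Integrable g ((P.map X).prod (P.map Y))) :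
    ∫ ω, g (X ω, Y ω) ∂P = ∫ x, ∫ y, g (x, y) ∂P.map Y ∂P.map X := by
  rw [← integral_prod g hg, ← hXY.map_prod_eq_prod_map_map hX hY,
    integral_map (hX.prodMk hY) (hXY.map_prod_eq_prod_map_map hX hY ▸ hg.aestronglyMeasurable)]

lemma integrable_max_zero_sub_sqrt_mul_prod_gaussianReal (ρ : Measure ℝ) [IsFiniteMeasure ρ]
    (μ : ℝ) {σ : ℝ} (hσ : 0 ≤ σ) :
    Integrable (fun p : ℝ × ℝ => max 0 (p.2 - μ - √p.1 * σ))
      (ρ.prod (gaussianReal μ (σ ^ 2).toNNReal)) := by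
  have hdev : Integrable (fun z => z - μ) (gaussianReal μ (σ ^ 2).toNNReal) :=
    ((memLp_id_gaussianReal 1).integrable le_rfl).sub (integrable_const μ)
  refine (hdev.comp_snd ρ).mono (by fun_prop) (ae_of_all _ fun p => ?_)
  have hshift : 0 ≤ √p.1 * σ := mul_nonneg (sqrt_nonneg _) hσ
  rw [norm_of_nonneg (le_max_left _ _), norm_eq_abs]
  exact max_le (abs_nonneg _) ((sub_le_self _ hshift).trans (le_abs_self _))

theorem expected_positive_part_randomized_ucb_bound
    {Ω : Type*} [MeasurableSpace Ω] (P : Measure Ω) [IsProbabilityMeasure P]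
    (μ σ : ℝ) (hσ : 0 ≤ σ)
    (Z : Ω → ℝ) (hZ : Measure.map Z P = gaussianReal μ (Real.toNNReal (σ ^ 2)))
    (ζ : Ω → ℝ) (hζ : ∀ ω, 0 ≤ ζ ω)
    (hindep : IndepFun ζ Z P)
    (hint : Integrable (fun ω => Real.exp (-ζ ω / 2)) P) :
    ∫ ω, max 0 (Z ω - μ - Real.sqrt (ζ ω) * σ) ∂P ≤
      (σ / Real.sqrt (2 * π)) * ∫ ω, Real.exp (-ζ ω / 2) ∂P := by
  have hZm : AEMeasurable Z P := aemeasurable_of_map_neZero (by rw [hZ]; infer_instance)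
  have hζm : AEMeasurable ζ P := by
    refine aemeasurable_of_aemeasurable_exp_mul (t := -1 / 2) (by norm_num) ?_
    simpa only [neg_div, neg_mul, one_div, inv_mul_eq_div] using hint.aemeasurable
  have hgint := integrable_max_zero_sub_sqrt_mul_prod_gaussianReal (P.map ζ) μ hσ
  have hexp : Integrable (fun t => exp (-t / 2)) (P.map ζ) :=
    (integrable_map_measure (by fun_prop) hζm).mpr hint
  have hpointwise : ∀ᵐ t ∂P.map ζ, ∫ z, max 0 (z - μ - √t * σ) ∂P.map Z
      ≤ σ / √(2 * π) * exp (-t / 2) := by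
    filter_upwards [(ae_map_iff hζm measurableSet_Ici).mpr (ae_of_all _ hζ)] with t ht
    rw [hZ]
    exact integral_max_zero_sub_sqrt_mul_gaussianReal_le μ hσ ht
  rw [← hZ] at hgint
  calc ∫ ω, max 0 (Z ω - μ - √(ζ ω) * σ) ∂P
      = ∫ t, ∫ z, max 0 (z - μ - √t * σ) ∂P.map Z ∂P.map ζ :=
        hindep.integral_comp_eq_integral_integral (g := fun p => max 0 (p.2 - μ - √p.1 * σ))
          hζm hZm hgint
    _ ≤ ∫ t, σ / √(2 * π) * exp (-t / 2) ∂P.map ζ :=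
        integral_mono_ae hgint.integral_prod_left (hexp.const_mul _) hpointwise
    _ = σ / √(2 * π) * ∫ ω, exp (-ζ ω / 2) ∂P := by
        rw [integral_const_mul, integral_map hζm (by fun_prop)]
end
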